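/- Let (Ω, 𝔽, ℙ) be a probability space and let h : Ω → ℂ^N and d : Ω → ℂ^{q} be independent random vectors with all entries square-integrable, E[d] = 0, E[d d^H] = E_s · I_q for some E_s > 0, and E[h h^H] = Σ_hh. Let F ∈ ℂ^{D×N} and B ∈ ℂ^{D×q} be deterministic matrices, and define the random vector Ψ = diag(B d) · F h ∈ ℂ^D. Then E[Ψ] = 0 and E[Ψ Ψ^H] = E_s · (F Σ_hh F^H) ∘ (B B^H), where ∘ denotes the entrywise (Hadamard) product. -/

import Mathlib

open Matrix MeasureTheory ProbabilityTheory ComplexConjugate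
open scoped ENNReal

section Aux

variable {Ω : Type*} [MeasurableSpace Ω] {μ : Measure Ω}

lemma memLp_conj {f : Ω → ℂ} {p : ℝ≥0∞} (hf : MemLp f p μ) :
    MemLp (fun ω => conj (f ω)) p μ := by
  refine MemLp.of_le hf (Complex.continuous_conj.comp_aestronglyMeasurable hf.1) ?_
  filter_upwards with ω
  simp

lemma l2_mul_integrable {f g : Ω → ℂ} (hf : MemLp f 2 μ) (hg : MemLp g 2 μ) :
    Integrable (fun ω => f ω * g ω) μ := by
  rw [← memLp_one_iff_integrable]
  have h1 : (1 : ℝ≥0∞) / 1 = 1 / 2 + 1 / 2 := by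
    rw [ENNReal.div_add_div_same, one_div_one,
      show ((1:ℝ≥0∞)+1) = 2 from one_add_one_eq_two,
      ENNReal.div_self (by norm_num) (by norm_num)]
  exact hg.smul (φ := f) hf

lemma cmul_decomp (z w : ℂ) : z * w =
    ((z.re * w.re - z.im * w.im : ℝ) : ℂ) +
    ((z.re * w.im + z.im * w.re : ℝ) : ℂ) * Complex.I := by
  apply Complex.ext <;> simp [Complex.mul_re, Complex.mul_im]

lemma indepFun_integral_mul_complex {X Y : Ω → ℂ}
    (hXY : IndepFun X Y μ) (hX : Integrable X μ) (hY : Integrable Y μ) :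
    ∫ ω, X ω * Y ω ∂μ = (∫ ω, X ω ∂μ) * ∫ ω, Y ω ∂μ := by
  have hXYint : Integrable (fun ω => X ω * Y ω) μ := hXY.integrable_mul hX hY
  have ha : Integrable (fun ω => (X ω).re) μ := hX.re
  have hb : Integrable (fun ω => (X ω).im) μ := hX.im
  have hc : Integrable (fun ω => (Y ω).re) μ := hY.re
  have he : Integrable (fun ω => (Y ω).im) μ := hY.im
  have iac : ∫ ω, (X ω).re * (Y ω).re ∂μ = (∫ ω, (X ω).re ∂μ) * ∫ ω, (Y ω).re ∂μ := by
    simpa [Function.comp_def, Pi.mul_apply] using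
      (hXY.comp Complex.measurable_re Complex.measurable_re).integral_mul_eq_mul_integral ha.aestronglyMeasurable hc.aestronglyMeasurable
  have iae : ∫ ω, (X ω).re * (Y ω).im ∂μ = (∫ ω, (X ω).re ∂μ) * ∫ ω, (Y ω).im ∂μ := by
    simpa [Function.comp_def, Pi.mul_apply] using
      (hXY.comp Complex.measurable_re Complex.measurable_im).integral_mul_eq_mul_integral ha.aestronglyMeasurable he.aestronglyMeasurable
  have ibc : ∫ ω, (X ω).im * (Y ω).re ∂μ = (∫ ω, (X ω).im ∂μ) * ∫ ω, (Y ω).re ∂μ := by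
    simpa [Function.comp_def, Pi.mul_apply] using
      (hXY.comp Complex.measurable_im Complex.measurable_re).integral_mul_eq_mul_integral hb.aestronglyMeasurable hc.aestronglyMeasurable
  have ibe : ∫ ω, (X ω).im * (Y ω).im ∂μ = (∫ ω, (X ω).im ∂μ) * ∫ ω, (Y ω).im ∂μ := by
    simpa [Function.comp_def, Pi.mul_apply] using
      (hXY.comp Complex.measurable_im Complex.measurable_im).integral_mul_eq_mul_integral hb.aestronglyMeasurable he.aestronglyMeasurable
  have Iac : Integrable (fun ω => (X ω).re * (Y ω).re) μ :=
    (hXY.comp Complex.measurable_re Complex.measurable_re).integrable_mul ha hc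
  have Iae : Integrable (fun ω => (X ω).re * (Y ω).im) μ :=
    (hXY.comp Complex.measurable_re Complex.measurable_im).integrable_mul ha he
  have Ibc : Integrable (fun ω => (X ω).im * (Y ω).re) μ :=
    (hXY.comp Complex.measurable_im Complex.measurable_re).integrable_mul hb hc
  have Ibe : Integrable (fun ω => (X ω).im * (Y ω).im) μ :=
    (hXY.comp Complex.measurable_im Complex.measurable_im).integrable_mul hb he
  have hL : ∫ ω, X ω * Y ω ∂μ =
      ((∫ ω, (X ω * Y ω).re ∂μ : ℝ) : ℂ) + ((∫ ω, (X ω * Y ω).im ∂μ : ℝ) : ℂ) * Complex.I := by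
    simpa using (integral_re_add_im hXYint).symm
  have hre : ∫ ω, (X ω * Y ω).re ∂μ =
      (∫ ω, (X ω).re ∂μ) * (∫ ω, (Y ω).re ∂μ) - (∫ ω, (X ω).im ∂μ) * (∫ ω, (Y ω).im ∂μ) := by
    rw [show (fun ω => (X ω * Y ω).re) = fun ω => (X ω).re * (Y ω).re - (X ω).im * (Y ω).im by
      ext ω; simp [Complex.mul_re]]
    rw [integral_sub Iac Ibe, iac, ibe]
  have him : ∫ ω, (X ω * Y ω).im ∂μ =
      (∫ ω, (X ω).re ∂μ) * (∫ ω, (Y ω).im ∂μ) + (∫ ω, (X ω).im ∂μ) * (∫ ω, (Y ω).re ∂μ) := by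
    rw [show (fun ω => (X ω * Y ω).im) = fun ω => (X ω).re * (Y ω).im + (X ω).im * (Y ω).re by
      ext ω; simp [Complex.mul_im]]
    rw [integral_add Iae Ibc, iae, ibc]
  have rX : (∫ ω, X ω ∂μ).re = ∫ ω, (X ω).re ∂μ := by simpa using (integral_re hX).symm
  have iX : (∫ ω, X ω ∂μ).im = ∫ ω, (X ω).im ∂μ := by simpa using (integral_im hX).symm
  have rY : (∫ ω, Y ω ∂μ).re = ∫ ω, (Y ω).re ∂μ := by simpa using (integral_re hY).symm
  have iY : (∫ ω, Y ω ∂μ).im = ∫ ω, (Y ω).im ∂μ := by simpa using (integral_im hY).symm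
  rw [hL, hre, him, cmul_decomp (∫ ω, X ω ∂μ) (∫ ω, Y ω ∂μ), rX, iX, rY, iY]

lemma integral_mulVec_mul_conj {m n : Type*} [Fintype n]
    (M : Matrix m n ℂ) (x : Ω → n → ℂ) (hx : ∀ k, MemLp (fun ω => x ω k) 2 μ)
    (i j : m) :
    ∫ ω, M.mulVec (x ω) i * conj (M.mulVec (x ω) j) ∂μ =
      ∑ k, ∑ l, M i k * conj (M j l) * ∫ ω, x ω k * conj (x ω l) ∂μ := by
  have e : (fun ω => M.mulVec (x ω) i * conj (M.mulVec (x ω) j)) =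
      fun ω => ∑ k, ∑ l, M i k * conj (M j l) * (x ω k * conj (x ω l)) := by
    funext ω
    simp only [Matrix.mulVec, dotProduct, map_sum, _root_.map_mul, Finset.sum_mul_sum]
    exact Finset.sum_congr rfl fun k _ => Finset.sum_congr rfl fun l _ => by ring
  have hint : ∀ (k l : n),
      Integrable (fun ω => M i k * conj (M j l) * (x ω k * conj (x ω l))) μ :=
    fun k l => (l2_mul_integrable (hx k) (memLp_conj (hx l))).const_mul _
  rw [e, integral_finset_sum _ fun k _ => integrable_finset_sum _ fun l _ => hint k l]
  refine Finset.sum_congr rfl fun k _ => ?_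
  rw [integral_finset_sum _ fun l _ => hint k l]
  exact Finset.sum_congr rfl fun l _ => integral_const_mul _ _

end Aux

/-- Let `h : Ω → ℂ^N` and `d : Ω → ℂ^q` be independent random vectors with
square-integrable entries, `E[d] = 0`, `E[d dᴴ] = E_s I_q` with `E_s > 0`, and
`E[h hᴴ] = Σ_hh`.  For deterministic `F ∈ ℂ^{D×N}`, `B ∈ ℂ^{D×q}`, the random vector
`Ψ = diag(B d) · F h` satisfies `E[Ψ] = 0` and
`E[Ψ Ψᴴ] = E_s · (F Σ_hh Fᴴ) ∘ (B Bᴴ)` (Hadamard product, stated entrywise). -/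
theorem interference_mean_zero_and_covariance
    {Ω : Type*} [MeasurableSpace Ω] (μ : Measure Ω) [IsProbabilityMeasure μ]
    (N q D : ℕ) (h : Ω → Fin N → ℂ) (d : Ω → Fin q → ℂ)
    (hmh : Measurable h) (hmd : Measurable d)
    (hindep : IndepFun h d μ)
    (hl2h : ∀ i, MemLp (fun ω => h ω i) 2 μ)
    (hl2d : ∀ i, MemLp (fun ω => d ω i) 2 μ)
    (Es : ℝ) (hEs : 0 < Es)
    (hd0 : ∀ i, ∫ ω, d ω i ∂μ = 0)
    (hdcov : ∀ i j, ∫ ω, d ω i * conj (d ω j) ∂μ = if i = j then (Es : ℂ) else 0)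
    (Sig : Matrix (Fin N) (Fin N) ℂ)
    (hSig : ∀ i j, Sig i j = ∫ ω, h ω i * conj (h ω j) ∂μ)
    (F : Matrix (Fin D) (Fin N) ℂ) (B : Matrix (Fin D) (Fin q) ℂ)
    (Ψ : Ω → Fin D → ℂ)
    (hΨ : ∀ ω i, Ψ ω i = B.mulVec (d ω) i * F.mulVec (h ω) i) :
    (∀ i, ∫ ω, Ψ ω i ∂μ = 0) ∧
    (∀ i j, ∫ ω, Ψ ω i * conj (Ψ ω j) ∂μ
      = (Es : ℂ) * ((F * Sig * Fᴴ) i j * (B * Bᴴ) i j)) := by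
  classical
  have mB : ∀ i : Fin D, Measurable fun v : Fin q → ℂ => B.mulVec v i := by
    intro i
    simp only [Matrix.mulVec, dotProduct]
    exact Finset.measurable_sum _ fun k _ => (measurable_pi_apply k).const_mul _
  have mF : ∀ i : Fin D, Measurable fun v : Fin N → ℂ => F.mulVec v i := by
    intro i
    simp only [Matrix.mulVec, dotProduct]
    exact Finset.measurable_sum _ fun k _ => (measurable_pi_apply k).const_mul _
  have eB : ∀ i : Fin D, (fun ω => B.mulVec (d ω) i) = fun ω => ∑ k, B i k * d ω k := by
    intro i; funext ω; simp [Matrix.mulVec, dotProduct]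
  have eF : ∀ i : Fin D, (fun ω => F.mulVec (h ω) i) = fun ω => ∑ k, F i k * h ω k := by
    intro i; funext ω; simp [Matrix.mulVec, dotProduct]
  have memBd : ∀ i : Fin D, MemLp (fun ω => B.mulVec (d ω) i) 2 μ := by
    intro i
    rw [eB i]
    exact memLp_finset_sum _ fun k _ => (hl2d k).const_mul (B i k)
  have memFh : ∀ i : Fin D, MemLp (fun ω => F.mulVec (h ω) i) 2 μ := by
    intro i
    rw [eF i]
    exact memLp_finset_sum _ fun k _ => (hl2h k).const_mul (F i k)
  have intBd0 : ∀ i : Fin D, ∫ ω, B.mulVec (d ω) i ∂μ = 0 := by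
    intro i
    rw [eB i, integral_finset_sum _
      (fun k _ => ((hl2d k).integrable one_le_two).const_mul (B i k))]
    simp [integral_const_mul, hd0]
  constructor
  · intro i
    have hXY : IndepFun (fun ω => B.mulVec (d ω) i) (fun ω => F.mulVec (h ω) i) μ :=
      hindep.symm.comp (mB i) (mF i)
    have key : ∫ ω, Ψ ω i ∂μ
        = (∫ ω, B.mulVec (d ω) i ∂μ) * ∫ ω, F.mulVec (h ω) i ∂μ := by
      rw [← indepFun_integral_mul_complex hXY ((memBd i).integrable one_le_two)
        ((memFh i).integrable one_le_two)]
      exact integral_congr_ae (Filter.Eventually.of_forall fun ω => hΨ ω i)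
    rw [key, intBd0 i, zero_mul]
  · intro i j
    have hXY : IndepFun (fun ω => B.mulVec (d ω) i * conj (B.mulVec (d ω) j))
        (fun ω => F.mulVec (h ω) i * conj (F.mulVec (h ω) j)) μ :=
      hindep.symm.comp ((mB i).mul (Complex.continuous_conj.measurable.comp (mB j))) ((mF i).mul (Complex.continuous_conj.measurable.comp (mF j)))
    have IBB : Integrable (fun ω => B.mulVec (d ω) i * conj (B.mulVec (d ω) j)) μ :=
      l2_mul_integrable (memBd i) (memLp_conj (memBd j))
    have IFF : Integrable (fun ω => F.mulVec (h ω) i * conj (F.mulVec (h ω) j)) μ :=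
      l2_mul_integrable (memFh i) (memLp_conj (memFh j))
    have key : ∫ ω, Ψ ω i * conj (Ψ ω j) ∂μ
        = (∫ ω, B.mulVec (d ω) i * conj (B.mulVec (d ω) j) ∂μ) *
          ∫ ω, F.mulVec (h ω) i * conj (F.mulVec (h ω) j) ∂μ := by
      rw [← indepFun_integral_mul_complex hXY IBB IFF]
      refine integral_congr_ae (Filter.Eventually.of_forall fun ω => ?_)
      simp only [hΨ, _root_.map_mul]
      ring
    have EB : ∫ ω, B.mulVec (d ω) i * conj (B.mulVec (d ω) j) ∂μ
        = (Es : ℂ) * (B * Bᴴ) i j := by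
      rw [integral_mulVec_mul_conj B d hl2d i j]
      simp only [hdcov, mul_ite, mul_zero, Finset.sum_ite_eq, Finset.mem_univ, if_true]
      rw [Matrix.mul_apply, Finset.mul_sum]
      refine Finset.sum_congr rfl fun k _ => ?_
      rw [Matrix.conjTranspose_apply, starRingEnd_apply]
      ring
    have EF : ∫ ω, F.mulVec (h ω) i * conj (F.mulVec (h ω) j) ∂μ
        = (F * Sig * Fᴴ) i j := by
      rw [integral_mulVec_mul_conj F h hl2h i j]
      have hexp : (F * Sig * Fᴴ) i j = ∑ n, ∑ m, F i n * conj (F j m) * Sig n m := by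
        simp only [Matrix.mul_apply, Matrix.conjTranspose_apply, Finset.sum_mul,
          starRingEnd_apply]
        rw [Finset.sum_comm]
        exact Finset.sum_congr rfl fun n _ => Finset.sum_congr rfl fun m _ => by ring
      rw [hexp]
      exact Finset.sum_congr rfl fun n _ => Finset.sum_congr rfl fun m _ => by
        rw [← hSig n m]
    rw [key, EB, EF]
    ring
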